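/- (a) For every integer n ≥ 2^7·5^6 there exist integers a ≥ 1 and b ≥ 0 such that (380/453)·n ≤ 2^a·5^b ≤ n. (b) For every integer n ≥ 2^7·5^15 there exist integers a ≥ 1 and b ≥ 0 such that (35/39)·n ≤ 2^a·5^b ≤ n. -/

import Mathlib

/-- The Shallit sequence `U(k)`: `U₀ = 0`, `U₁ = 1`,
`U_{n+2} = (4k+2) U_{n+1} - U_n`. -/
def shallitU (k : ℕ) : ℕ → ℤ
  | 0 => 0
  | 1 => 1
  | n + 2 => (4 * (k : ℤ) + 2) * shallitU k (n + 1) - shallitU k n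

/-- `U₀(k), …, U_{n-1}(k)` are pairwise incongruent modulo `m`. -/
def Discriminates (k m n : ℕ) : Prop :=
  ∀ i j : ℕ, i < n → j < n → shallitU k i ≡ shallitU k j [ZMOD (m : ℤ)] → i = j

/-- The discriminator `D_k(n)`: the smallest positive integer `m` such that
`U₀(k), …, U_{n-1}(k)` are pairwise incongruent modulo `m`. -/
noncomputable def shallitD (k n : ℕ) : ℕ :=
  sInf {m : ℕ | 0 < m ∧ Discriminates k m n}

/-- The index of appearance `z_k(m)`: the smallest `n ≥ 1` with `m ∣ U_n(k)`. -/
noncomputable def shallitZ (k m : ℕ) : ℕ :=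
  sInf {n : ℕ | 0 < n ∧ (m : ℤ) ∣ shallitU k n}

/-- The incongruence index `ι_k(m)`: the largest `j` such that
`U₀(k), …, U_{j-1}(k)` are pairwise distinct modulo `m`. -/
noncomputable def shallitIota (k m : ℕ) : ℕ :=
  sSup {j : ℕ | Discriminates k m j}

/-- `P(N)`: positive integers all of whose prime divisors divide `N`. -/
def setP (N : ℕ) : Set ℕ :=
  {m | 0 < m ∧ ∀ p : ℕ, p.Prime → p ∣ m → p ∣ N}

/-- The set `A_k`. -/
def setA (k : ℕ) : Set ℕ :=
  {m | 0 < m ∧ Odd m ∧ (∀ p : ℕ, p.Prime → p ∣ m → p ∣ k) ∧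
    (k % 9 = 6 → ¬ (9 ∣ m))}

/-- The set `B_k`. -/
def setB (k : ℕ) : Set ℕ :=
  {m | 0 < m ∧ Even m ∧ (∀ p : ℕ, p.Prime → p ∣ m → p ∣ k * (k + 1)) ∧
    ((k % 9 = 2 ∨ k % 9 = 6) → ¬ (9 ∣ m))}

/-- The set `S_{k,n} = {m ∈ A_k ∪ B_k : m ≥ n}`. -/
def setS (k n : ℕ) : Set ℕ :=
  {m | m ∈ setA k ∪ setB k ∧ n ≤ m}

/-- The set `A_{5,k} = {a·5^b : a ∈ A_k, b ≥ 1}`. -/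
def setA5 (k : ℕ) : Set ℕ :=
  {m | ∃ a b : ℕ, a ∈ setA k ∧ 1 ≤ b ∧ m = a * 5 ^ b}

/-- The set `B_{5,k} = {a·5^b : a ∈ B_k, b ≥ 1}`. -/
def setB5 (k : ℕ) : Set ℕ :=
  {m | ∃ a b : ℕ, a ∈ setB k ∧ 1 ≤ b ∧ m = a * 5 ^ b}


lemma smooth_interval (c d x y e : ℕ) (hd : 0 < d) (hc : 0 < c)
    (h1 : d * 2 ^ 7 ≤ c * 5 ^ 3)
    (h2 : d * 5 ^ y ≤ c * 2 ^ x)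
    (h3 : 2 ^ x < 5 ^ y)
    (h5 : 25 * 2 ^ x < 2 ^ 7 * 5 ^ e) :
    ∀ n : ℕ, 2 ^ 7 * 5 ^ e ≤ n →
      ∃ a b : ℕ, 1 ≤ a ∧ d * n ≤ c * (2 ^ a * 5 ^ b) ∧ 2 ^ a * 5 ^ b ≤ n := by
  intro n hn
  set F := ((Finset.range (n + 1) ×ˢ Finset.range (n + 1)).filter
    (fun p => 1 ≤ p.1 ∧ 2 ^ p.1 * 5 ^ p.2 ≤ n)).image
    (fun p => 2 ^ p.1 * 5 ^ p.2) with hF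
  have hmem_of : ∀ a b : ℕ, 1 ≤ a → 2 ^ a * 5 ^ b ≤ n → 2 ^ a * 5 ^ b ∈ F := by
    intro a b ha hle
    have ha2 : a < 2 ^ a := Nat.lt_two_pow_self
    have hb5 : b < 5 ^ b := Nat.lt_pow_self (by norm_num : 1 < 5)
    have h2a : 2 ^ a ≤ 2 ^ a * 5 ^ b := Nat.le_mul_of_pos_right _ (by positivity)
    have h5b : 5 ^ b ≤ 2 ^ a * 5 ^ b := Nat.le_mul_of_pos_left _ (by positivity)
    simp only [hF, Finset.mem_image, Finset.mem_filter, Finset.mem_product,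
      Finset.mem_range]
    exact ⟨(a, b), ⟨⟨by omega, by omega⟩, ha, hle⟩, rfl⟩
  have hne : F.Nonempty := ⟨_, hmem_of 7 e (by norm_num) hn⟩
  set m := F.max' hne with hm
  have hmF : m ∈ F := F.max'_mem hne
  simp only [hF, Finset.mem_image, Finset.mem_filter, Finset.mem_product,
    Finset.mem_range] at hmF
  obtain ⟨⟨a, b⟩, ⟨-, ha, hle⟩, hab'⟩ := hmF
  have hab : m = 2 ^ a * 5 ^ b := hab'.symm
  have hmn : m ≤ n := hab ▸ hle
  have hm1 : 1 ≤ m := by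
    rw [hab]; have : 0 < 2 ^ a * 5 ^ b := by positivity
    omega
  have hTm : 2 ^ 7 * 5 ^ e ≤ m := F.le_max' _ (hmem_of 7 e (by norm_num) hn)
  have hmax : ∀ a' b' : ℕ, 1 ≤ a' → 2 ^ a' * 5 ^ b' ≤ n → 2 ^ a' * 5 ^ b' ≤ m :=
    fun a' b' h1' h2' => F.le_max' _ (hmem_of a' b' h1' h2')
  rcases le_or_gt 3 b with hb | hb
  · -- use m' = m * 2^7 / 5^3
    obtain ⟨b', rfl⟩ := Nat.exists_eq_add_of_le hb
    have key : 5 ^ 3 * (2 ^ (a + 7) * 5 ^ b') = 2 ^ 7 * m := by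
      rw [hab]; ring
    have hmm' : m < 2 ^ (a + 7) * 5 ^ b' := by
      have : 5 ^ 3 * m < 5 ^ 3 * (2 ^ (a + 7) * 5 ^ b') := by
        rw [key]
        exact (Nat.mul_lt_mul_right (show 0 < m by omega)).2 (by norm_num)
      exact lt_of_mul_lt_mul_left this (Nat.zero_le _)
    have hgt : n < 2 ^ (a + 7) * 5 ^ b' := by
      by_contra h
      push_neg at h
      exact absurd (hmax _ _ (by omega) h) (by omega)
    refine ⟨a, 3 + b', ha, ?_, hab ▸ hmn⟩
    have step : 5 ^ 3 * n < 2 ^ 7 * m := by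
      calc 5 ^ 3 * n < 5 ^ 3 * (2 ^ (a + 7) * 5 ^ b') :=
            (Nat.mul_lt_mul_left (by norm_num)).2 hgt
        _ = 2 ^ 7 * m := key
    have hfin : 5 ^ 3 * (d * n) ≤ 5 ^ 3 * (c * m) := by
      calc 5 ^ 3 * (d * n) = d * (5 ^ 3 * n) := by ring
        _ ≤ d * (2 ^ 7 * m) := Nat.mul_le_mul_left d step.le
        _ = (d * 2 ^ 7) * m := by ring
        _ ≤ (c * 5 ^ 3) * m := Nat.mul_le_mul_right m h1
        _ = 5 ^ 3 * (c * m) := by ring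
    have := Nat.le_of_mul_le_mul_left hfin (by norm_num)
    rw [hab] at this; exact this
  · -- b ≤ 2, use m' = m * 5^y / 2^x
    have hax : x + 1 ≤ a := by
      by_contra h
      push_neg at h
      have : m ≤ 25 * 2 ^ x := by
        rw [hab]
        calc 2 ^ a * 5 ^ b ≤ 2 ^ x * 5 ^ 2 :=
              Nat.mul_le_mul (Nat.pow_le_pow_right (by norm_num) (by omega))
                (Nat.pow_le_pow_right (by norm_num) (by omega))
          _ = 25 * 2 ^ x := by ring
      omega
    obtain ⟨a', ha'⟩ := Nat.exists_eq_add_of_le (show x ≤ a by omega)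
    have ha1 : 1 ≤ a' := by omega
    have key : 2 ^ x * (2 ^ a' * 5 ^ (b + y)) = 5 ^ y * m := by
      rw [hab, ha']; ring
    have hmm' : m < 2 ^ a' * 5 ^ (b + y) := by
      have : 2 ^ x * m < 2 ^ x * (2 ^ a' * 5 ^ (b + y)) := by
        rw [key]
        exact (Nat.mul_lt_mul_right (show 0 < m by omega)).2 h3
      exact lt_of_mul_lt_mul_left this (Nat.zero_le _)
    have hgt : n < 2 ^ a' * 5 ^ (b + y) := by
      by_contra h
      push_neg at h
      exact absurd (hmax _ _ ha1 h) (by omega)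
    refine ⟨a, b, ha, ?_, hab ▸ hmn⟩
    have step : 2 ^ x * n < 5 ^ y * m := by
      calc 2 ^ x * n < 2 ^ x * (2 ^ a' * 5 ^ (b + y)) :=
            (Nat.mul_lt_mul_left (by positivity)).2 hgt
        _ = 5 ^ y * m := key
    have hfin : 5 ^ y * (d * n) ≤ 5 ^ y * (c * m) := by
      calc 5 ^ y * (d * n) = (d * 5 ^ y) * n := by ring
        _ ≤ (c * 2 ^ x) * n := Nat.mul_le_mul_right n h2
        _ = c * (2 ^ x * n) := by ring
        _ ≤ c * (5 ^ y * m) := Nat.mul_le_mul_left c step.le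
        _ = 5 ^ y * (c * m) := by ring
    have := Nat.le_of_mul_le_mul_left hfin (by positivity)
    rw [hab] at this; exact this

theorem stmt17 :
    (∀ n : ℕ, 2 ^ 7 * 5 ^ 6 ≤ n → ∃ a b : ℕ, 1 ≤ a ∧
      (380 / 453 : ℝ) * n ≤ 2 ^ a * 5 ^ b ∧ ((2 : ℝ) ^ a * 5 ^ b) ≤ n) ∧
    (∀ n : ℕ, 2 ^ 7 * 5 ^ 15 ≤ n → ∃ a b : ℕ, 1 ≤ a ∧
      (35 / 39 : ℝ) * n ≤ 2 ^ a * 5 ^ b ∧ ((2 : ℝ) ^ a * 5 ^ b) ≤ n) := by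
  constructor
  · intro n hn
    obtain ⟨a, b, ha, hl, hu⟩ := smooth_interval 453 380 16 7 6 (by norm_num) (by norm_num)
      (by norm_num) (by norm_num) (by norm_num) (by norm_num) n hn
    refine ⟨a, b, ha, ?_, by exact_mod_cast hu⟩
    have h := (Nat.cast_le (α := ℝ)).2 hl
    push_cast at h
    rw [div_mul_eq_mul_div, div_le_iff₀ (by norm_num)]
    linarith
  · intro n hn
    obtain ⟨a, b, ha, hl, hu⟩ := smooth_interval 39 35 37 16 15 (by norm_num) (by norm_num)
      (by norm_num) (by norm_num) (by norm_num) (by norm_num) n hn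
    refine ⟨a, b, ha, ?_, by exact_mod_cast hu⟩
    have h := (Nat.cast_le (α := ℝ)).2 hl
    push_cast at h
    rw [div_mul_eq_mul_div, div_le_iff₀ (by norm_num)]
    linarith
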